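/- For integers r2 ≥ 3 and 1 ≤ c ≤ (r2 − 1)/2, there is no graph in which every vertex has degree r2 and every vertex is contained in exactly r2(r2−1)/2 − c triangles. -/

import Mathlib

open SimpleGraph Finset

/-- The K3-degree of a vertex: the number of triangles (3-cliques) of `G` containing `v`. -/
noncomputable def K3deg {V : Type*} (G : SimpleGraph V) (v : V) : ℕ :=
  {t : Finset V | G.IsNClique 3 t ∧ v ∈ t}.ncard

/-- The degree of a vertex, as the cardinality of its open neighbourhood. -/
noncomputable def deg {V : Type*} (G : SimpleGraph V) (v : V) : ℕ :=
  (G.neighborSet v).ncard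

/-- `G` has parameters `(r2, r3)`: every vertex has degree `r2` and K3-degree `r3`. -/
def HasParams {V : Type*} (G : SimpleGraph V) (r2 r3 : ℕ) : Prop :=
  ∀ v : V, deg G v = r2 ∧ K3deg G v = r3

section aux
open scoped Classical
variable {V : Type} [Fintype V] (G : SimpleGraph V)

lemma deg_eq (v : V) : deg G v = (G.neighborFinset v).card := by
  rw [deg, SimpleGraph.neighborFinset_def, Set.ncard_eq_toFinset_card']

lemma K3deg_eq (v : V) :
    K3deg G v =
      (((G.neighborFinset v).powersetCard 2).filter
        (fun p : Finset V => G.IsClique (↑p : Set V))).card := by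
  rw [K3deg, Set.ncard_eq_toFinset_card', Set.toFinset_setOf]
  apply Finset.card_bij (fun t _ => t.erase v)
  · rintro t ht
    simp only [mem_filter, mem_univ, true_and] at ht
    obtain ⟨⟨hcl, hcard⟩, hv⟩ := ht
    simp only [mem_filter, mem_powersetCard]
    refine ⟨⟨?_, ?_⟩, ?_⟩
    · intro x hx
      rw [mem_erase] at hx
      rw [mem_neighborFinset]
      exact hcl (by exact_mod_cast hv) (by exact_mod_cast hx.2) (Ne.symm hx.1)
    · rw [card_erase_of_mem hv, hcard]
    · exact hcl.subset (by exact_mod_cast Finset.erase_subset v t)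
  · rintro t₁ h₁ t₂ h₂ h
    simp only [mem_filter, mem_univ, true_and] at h₁ h₂
    rw [← Finset.insert_erase h₁.2, ← Finset.insert_erase h₂.2, h]
  · rintro p hp
    simp only [mem_filter, mem_powersetCard] at hp
    obtain ⟨⟨hsub, hcard⟩, hcl⟩ := hp
    have hvp : v ∉ p := fun hv => G.notMem_neighborFinset_self v (hsub hv)
    refine ⟨insert v p, ?_, ?_⟩
    · simp only [mem_filter, mem_univ, true_and]
      refine ⟨⟨?_, ?_⟩, mem_insert_self _ _⟩
      · rw [Finset.coe_insert]
        exact hcl.insert (fun b hb _ => by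
          rw [← mem_neighborFinset]; exact hsub (by exact_mod_cast hb))
      · rw [card_insert_of_notMem hvp, hcard]
    · exact Finset.erase_insert hvp

/-- closed neighborhood -/
noncomputable def Kc (v : V) : Finset V := insert v (G.neighborFinset v)

/-- bad (non-adjacent) pairs inside the open neighborhood of `v` -/
noncomputable def Bad (v : V) : Finset (Finset V) :=
  ((G.neighborFinset v).powersetCard 2).filter
    (fun p : Finset V => ¬ G.IsClique (↑p : Set V))

lemma mem_Kc {v u : V} : u ∈ Kc G v ↔ u = v ∨ G.Adj v u := by
  simp [Kc, mem_insert, mem_neighborFinset]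

lemma card_Kc {r2 : ℕ} (hdeg : ∀ w, (G.neighborFinset w).card = r2) (v : V) :
    (Kc G v).card = r2 + 1 := by
  rw [Kc, card_insert_of_notMem (G.notMem_neighborFinset_self v), hdeg]

lemma pair_mem_Bad {v x y : V} (hx : x ∈ G.neighborFinset v) (hy : y ∈ G.neighborFinset v)
    (hxy : x ≠ y) (hadj : ¬ G.Adj x y) : ({x, y} : Finset V) ∈ Bad G v := by
  rw [Bad, mem_filter, mem_powersetCard]
  refine ⟨⟨?_, ?_⟩, ?_⟩
  · intro z hz
    rcases Finset.mem_insert.1 hz with h | h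
    · exact h ▸ hx
    · exact (Finset.mem_singleton.1 h) ▸ hy
  · exact Finset.card_pair hxy
  · intro hcl
    have : ((↑({x, y} : Finset V) : Set V)) = ({x, y} : Set V) := by simp
    rw [this, SimpleGraph.isClique_pair] at hcl
    exact hadj (hcl hxy)

lemma mem_Bad_elim {v x : V} {p : Finset V} (hp : p ∈ Bad G v) (hx : x ∈ p) :
    ∃ y, y ∈ G.neighborFinset v ∧ y ≠ x ∧ ¬ G.Adj x y ∧ p = {x, y} := by
  rw [Bad, mem_filter, mem_powersetCard] at hp
  obtain ⟨⟨hsub, hcard⟩, hncl⟩ := hp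
  obtain ⟨u, w, huw, rfl⟩ := Finset.card_eq_two.1 hcard
  have hpair : ∀ (a b : V), a ≠ b → ({u, w} : Finset V) = {a, b} → x = a →
      ∃ y, y ∈ G.neighborFinset v ∧ y ≠ x ∧ ¬ G.Adj x y ∧ ({u, w} : Finset V) = {x, y} := by
    rintro a b hab hset rfl
    refine ⟨b, ?_, fun h => hab h.symm, fun h => ?_, hset⟩
    · apply hsub; rw [hset]; exact Finset.mem_insert_of_mem (Finset.mem_singleton_self b)
    · apply hncl
      have : ((↑({u, w} : Finset V) : Set V)) = ({x, b} : Set V) := by rw [hset]; simp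
      rw [this, SimpleGraph.isClique_pair]
      intro _; exact h
  rcases Finset.mem_insert.1 hx with rfl | h
  · exact hpair x w huw rfl rfl
  · have hxw : x = w := Finset.mem_singleton.1 h
    subst hxw
    exact hpair x u (Ne.symm huw) (Finset.pair_comm u x) rfl

lemma Bad_subset_pairs {v : V} {p : Finset V} (hp : p ∈ Bad G v) :
    p ⊆ G.neighborFinset v ∧ p.card = 2 := by
  rw [Bad, mem_filter, mem_powersetCard] at hp
  exact ⟨hp.1.1, hp.1.2⟩

/-- if `u` lies in the closed nbhd of `v` and is in no bad pair, then `Kc u = Kc v`. -/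
lemma full_adj_class {r2 : ℕ} (hdeg : ∀ w, (G.neighborFinset w).card = r2)
    {v u : V} (hu : u ∈ Kc G v) (hnb : ∀ p ∈ Bad G v, u ∉ p) : Kc G u = Kc G v := by
  have hsub : Kc G v ⊆ Kc G u := by
    intro w hw
    rw [mem_Kc]
    by_cases hwu : w = u
    · exact Or.inl hwu
    right
    rcases (mem_Kc G).1 hu with rfl | hadju
    · rcases (mem_Kc G).1 hw with rfl | hadjw
      · exact absurd rfl hwu
      · exact hadjw
    · rcases (mem_Kc G).1 hw with rfl | hadjw
      · exact hadju.symm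
      · by_contra hnadj
        have hne : u ≠ w := fun h => hwu (h.symm)
        have := hnb _ (pair_mem_Bad G ((mem_neighborFinset _ _ _).2 hadju)
          ((mem_neighborFinset _ _ _).2 hadjw) hne hnadj)
        exact this (Finset.mem_insert_self u _)
  exact (Finset.eq_of_subset_of_card_le hsub
    (by rw [card_Kc G hdeg, card_Kc G hdeg])).symm

lemma Bad_card {r2 c : ℕ} (v : V) (hdeg : ∀ w, (G.neighborFinset w).card = r2)
    (hcle : c ≤ r2.choose 2)
    (hK3 : (((G.neighborFinset v).powersetCard 2).filter
        (fun p : Finset V => G.IsClique (↑p : Set V))).card = r2.choose 2 - c) :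
    (Bad G v).card = c := by
  have htot := Finset.card_filter_add_card_filter_not
    (s := (G.neighborFinset v).powersetCard 2)
    (fun p : Finset V => G.IsClique (↑p : Set V))
  rw [Finset.card_powersetCard, hdeg] at htot
  rw [Bad]
  omega

lemma handshake (v : V) (s : Finset V) :
    ∑ x ∈ s, ((Bad G v).filter (fun p => x ∈ p)).card ≤ 2 * (Bad G v).card := by
  have h1 : ∀ x, ((Bad G v).filter (fun p => x ∈ p)).card
      = ∑ p ∈ Bad G v, if x ∈ p then 1 else 0 := fun x => Finset.card_filter _ _
  calc ∑ x ∈ s, ((Bad G v).filter (fun p => x ∈ p)).card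
      = ∑ x ∈ s, ∑ p ∈ Bad G v, if x ∈ p then 1 else 0 := by simp_rw [h1]
    _ = ∑ p ∈ Bad G v, ∑ x ∈ s, if x ∈ p then 1 else 0 := Finset.sum_comm
    _ = ∑ p ∈ Bad G v, (s.filter (fun x => x ∈ p)).card := by
        simp_rw [Finset.card_filter]
    _ ≤ ∑ p ∈ Bad G v, p.card := by
        refine Finset.sum_le_sum fun p _ => ?_
        exact Finset.card_le_card (fun x hx => (Finset.mem_filter.1 hx).2)
    _ ≤ ∑ _p ∈ Bad G v, 2 := by
        refine Finset.sum_le_sum fun p hp => ?_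
        rw [Bad, mem_filter, mem_powersetCard] at hp
        exact le_of_eq hp.1.2
    _ = 2 * (Bad G v).card := by rw [Finset.sum_const, smul_eq_mul, mul_comm]

/-- non-neighbors of `x` inside `N(v)` -/
noncomputable def Mset (v x : V) : Finset V :=
  (G.neighborFinset v).filter (fun y => y ≠ x ∧ ¬ G.Adj x y)

lemma Mset_card (v x : V) (hx : x ∈ G.neighborFinset v) :
    (Mset G v x).card = ((Bad G v).filter (fun p => x ∈ p)).card := by
  apply Finset.card_bij (fun y _ => ({x, y} : Finset V))
  · rintro y hy
    rw [Mset, mem_filter] at hy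
    rw [mem_filter]
    exact ⟨pair_mem_Bad G hx hy.1 (Ne.symm hy.2.1) hy.2.2, Finset.mem_insert_self x _⟩
  · rintro y₁ h₁ y₂ h₂ h
    rw [Mset, mem_filter] at h₁ h₂
    have : y₁ ∈ ({x, y₂} : Finset V) := h ▸ Finset.mem_insert_of_mem (Finset.mem_singleton_self y₁)
    rcases Finset.mem_insert.1 this with h' | h'
    · exact absurd h' h₁.2.1
    · exact Finset.mem_singleton.1 h'
  · rintro p hp
    rw [mem_filter] at hp
    obtain ⟨y, hyN, hyx, hnadj, rfl⟩ := mem_Bad_elim G hp.1 hp.2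
    exact ⟨y, by rw [Mset, mem_filter]; exact ⟨hyN, hyx, hnadj⟩, rfl⟩

end aux

theorem stmt6 (r2 c : ℕ) (hr2 : 3 ≤ r2) (hc1 : 1 ≤ c) (hc : 2 * c ≤ r2 - 1) :
    ¬ ∃ (V : Type) (_ : Fintype V) (_ : Nonempty V) (G : SimpleGraph V),
      HasParams G r2 (Nat.choose r2 2 - c) := by
  rintro ⟨V, _, ⟨v⟩, G, h⟩
  classical
  -- basic counts
  have hdeg : ∀ w, (G.neighborFinset w).card = r2 := fun w => by
    rw [← deg_eq]; exact (h w).1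
  have hcle : c ≤ r2.choose 2 := by
    have h2 : r2 - 1 ≤ r2.choose 2 := by
      rw [Nat.choose_two_right]
      rw [Nat.le_div_iff_mul_le (by norm_num)]
      calc (r2 - 1) * 2 ≤ (r2 - 1) * r2 := Nat.mul_le_mul_left _ (by omega)
        _ = r2 * (r2 - 1) := Nat.mul_comm _ _
    omega
  have hbad : ∀ w, (Bad G w).card = c := fun w =>
    Bad_card G w hdeg hcle (by rw [← K3deg_eq]; exact (h w).2)
  -- class lower bound at every vertex
  have hclsLB : ∀ w : V, r2 + 1 ≤ (univ.filter (fun u => Kc G u = Kc G w)).card + 2 * c := by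
    intro w
    set X : Finset V := (Bad G w).biUnion id with hX
    have hsub : Kc G w \ X ⊆ univ.filter (fun u => Kc G u = Kc G w) := by
      intro u hu
      rw [Finset.mem_sdiff] at hu
      rw [mem_filter]
      refine ⟨mem_univ _, full_adj_class G hdeg hu.1 ?_⟩
      intro p hp hup
      exact hu.2 (Finset.mem_biUnion.2 ⟨p, hp, hup⟩)
    have hXcard : X.card ≤ 2 * c := by
      calc X.card ≤ ∑ p ∈ Bad G w, (id p).card := Finset.card_biUnion_le
        _ ≤ ∑ _p ∈ Bad G w, 2 := Finset.sum_le_sum fun p hp => by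
            rw [Bad, mem_filter, mem_powersetCard] at hp
            exact le_of_eq hp.1.2
        _ = 2 * c := by rw [Finset.sum_const, smul_eq_mul, mul_comm, hbad]
    have h1 : (Kc G w \ X).card + (Kc G w ∩ X).card = (Kc G w).card :=
      Finset.card_sdiff_add_card_inter _ _
    have h2 : (Kc G w ∩ X).card ≤ X.card := Finset.card_le_card (Finset.inter_subset_right)
    have h3 : (Kc G w \ X).card ≤ (univ.filter (fun u => Kc G u = Kc G w)).card :=
      Finset.card_le_card hsub
    rw [card_Kc G hdeg] at h1
    omega
  -- minimal class
  obtain ⟨v₀, -, hmin⟩ := Finset.exists_min_image univ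
    (fun w => (univ.filter (fun u => Kc G u = Kc G w)).card) ⟨v, mem_univ v⟩
  set A : Finset V := univ.filter (fun u => Kc G u = Kc G v₀) with hA
  set a : ℕ := A.card with ha
  have hmin' : ∀ w : V, a ≤ (univ.filter (fun u => Kc G u = Kc G w)).card :=
    fun w => hmin w (mem_univ w)
  have ha2 : 2 ≤ a := by
    have := hclsLB v₀
    rw [← hA] at this
    omega
  have hAsub : A ⊆ Kc G v₀ := by
    intro u hu
    rw [hA, mem_filter] at hu
    exact hu.2 ▸ Finset.mem_insert_self u _
  set B : Finset V := Kc G v₀ \ A with hB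
  have hBcard : B.card = r2 + 1 - a := by
    rw [hB, Finset.card_sdiff_of_subset hAsub, card_Kc G hdeg, ha]
  -- membership facts about B
  have hBmem : ∀ x ∈ B, x ∈ G.neighborFinset v₀ ∧ Kc G x ≠ Kc G v₀ := by
    intro x hx
    rw [hB, Finset.mem_sdiff, hA, mem_filter] at hx
    have hne : Kc G x ≠ Kc G v₀ := fun hEq => hx.2 ⟨mem_univ x, hEq⟩
    refine ⟨?_, hne⟩
    rcases (mem_Kc G).1 hx.1 with rfl | hadj
    · exact absurd rfl hne
    · exact (mem_neighborFinset _ _ _).2 hadj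
  -- every x ∈ B has nonempty Mset
  have hMne : ∀ x ∈ B, (Mset G v₀ x).Nonempty := by
    intro x hx
    obtain ⟨hxN, hne⟩ := hBmem x hx
    by_contra hempty
    rw [Finset.not_nonempty_iff_eq_empty] at hempty
    apply hne
    apply full_adj_class G hdeg (Finset.mem_insert_of_mem hxN)
    intro p hp hxp
    obtain ⟨y, hyN, hyx, hnadj, rfl⟩ := mem_Bad_elim G hp hxp
    have : y ∈ Mset G v₀ x := by rw [Mset, mem_filter]; exact ⟨hyN, hyx, hnadj⟩
    rw [hempty] at this
    exact absurd this (Finset.notMem_empty y)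
  -- key fact: elements of Mset are in B
  have hMB : ∀ x ∈ B, ∀ y ∈ Mset G v₀ x, y ∈ B := by
    intro x hx y hy
    rw [Mset, mem_filter] at hy
    obtain ⟨hyN, hyx, hnadj⟩ := hy
    rw [hB, Finset.mem_sdiff]
    refine ⟨Finset.mem_insert_of_mem hyN, ?_⟩
    intro hyA
    rw [hA, mem_filter] at hyA
    have hxK : x ∈ Kc G y := by
      rw [hyA.2]
      exact Finset.mem_insert_of_mem (hBmem x hx).1
    rcases (mem_Kc G).1 hxK with rfl | hadj
    · exact hyx rfl
    · exact hnadj hadj.symm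
  -- F6: each x ∈ B has at least a non-neighbors in N(v₀)
  have hMa : ∀ x ∈ B, a ≤ (Mset G v₀ x).card := by
    intro x hx
    obtain ⟨y, hy⟩ := hMne x hx
    have hyB : y ∈ B := hMB x hx y hy
    rw [Mset, mem_filter] at hy
    obtain ⟨hyN, hyx, hnadj⟩ := hy
    have hsub : univ.filter (fun u => Kc G u = Kc G y) ⊆ Mset G v₀ x := by
      intro w hw
      rw [mem_filter] at hw
      have hKw : Kc G w = Kc G y := hw.2
      have hv₀K : v₀ ∈ Kc G w := by
        rw [hKw, mem_Kc]
        exact Or.inr ((mem_neighborFinset _ _ _).1 hyN).symm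
      have hwN : w ∈ G.neighborFinset v₀ := by
        rcases (mem_Kc G).1 hv₀K with h | h
        · exfalso
          apply (hBmem y hyB).2
          rw [← hKw, h]
        · exact (mem_neighborFinset _ _ _).2 h.symm
      have hwx : w ≠ x := by
        rintro rfl
        have hyK : y ∈ Kc G w := by rw [hKw]; exact Finset.mem_insert_self y _
        rcases (mem_Kc G).1 hyK with h | h
        · exact hyx h
        · exact hnadj h
      have hnadjxw : ¬ G.Adj x w := by
        intro hadj
        have hxK : x ∈ Kc G w := (mem_Kc G).2 (Or.inr hadj.symm)
        rw [hKw] at hxK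
        rcases (mem_Kc G).1 hxK with h | h
        · exact hyx h.symm
        · exact hnadj h.symm
      rw [Mset, mem_filter]
      exact ⟨hwN, hwx, hnadjxw⟩
    exact le_trans (hmin' y) (Finset.card_le_card hsub)
  -- F7: a * |Mset x| ≤ c for x ∈ B
  have hF7 : ∀ x ∈ B, a * (Mset G v₀ x).card ≤ c := by
    intro x hx
    obtain ⟨hxN, hxne⟩ := hBmem x hx
    set O : Finset V := G.neighborFinset x \ Kc G v₀ with hO
    have hstep1 : (Mset G v₀ x).card ≤ O.card := by
      have hins : insert x (Mset G v₀ x) ⊆ Kc G v₀ \ G.neighborFinset x := by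
        intro z hz
        rw [Finset.mem_sdiff]
        rcases Finset.mem_insert.1 hz with rfl | hz
        · exact ⟨Finset.mem_insert_of_mem hxN, G.notMem_neighborFinset_self z⟩
        · rw [Mset, mem_filter] at hz
          exact ⟨Finset.mem_insert_of_mem hz.1,
            fun hmem => hz.2.2 ((mem_neighborFinset _ _ _).1 hmem)⟩
      have hxM : x ∉ Mset G v₀ x := by
        rw [Mset, mem_filter]
        rintro ⟨-, h, -⟩
        exact h rfl
      have h1 : (Mset G v₀ x).card + 1 ≤ (Kc G v₀ \ G.neighborFinset x).card := by
        rw [← Finset.card_insert_of_notMem hxM]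
        exact Finset.card_le_card hins
      have h2 := Finset.card_sdiff_add_card_inter (Kc G v₀) (G.neighborFinset x)
      have h3 := Finset.card_sdiff_add_card_inter (G.neighborFinset x) (Kc G v₀)
      rw [card_Kc G hdeg] at h2
      rw [hdeg] at h3
      have h4 : (Kc G v₀ ∩ G.neighborFinset x).card
          = (G.neighborFinset x ∩ Kc G v₀).card := by rw [Finset.inter_comm]
      rw [hO]
      omega
    have hstep2 : a * O.card ≤ c := by
      rw [← hbad x]
      have hcardAO : (A ×ˢ O).card = a * O.card := by rw [Finset.card_product, ha]
      rw [← hcardAO]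
      apply Finset.card_le_card_of_injOn (fun q : V × V => ({q.1, q.2} : Finset V))
      · rintro ⟨w, o⟩ hq
        rw [Finset.mem_coe, Finset.mem_product] at hq
        obtain ⟨hwA, hoO⟩ := hq
        rw [hO, Finset.mem_sdiff] at hoO
        have hKw : Kc G w = Kc G v₀ := by
          rw [hA, mem_filter] at hwA
          exact hwA.2
        have hwx : w ≠ x := fun h => hxne (h ▸ hKw)
        have hwNx : w ∈ G.neighborFinset x := by
          have hxK : x ∈ Kc G w := by
            rw [hKw]
            exact Finset.mem_insert_of_mem hxN
          rcases (mem_Kc G).1 hxK with h | h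
          · exact absurd h.symm hwx
          · exact (mem_neighborFinset _ _ _).2 h.symm
        have hwo : w ≠ o := by
          rintro rfl
          exact hoO.2 (hAsub hwA)
        have hnadjwo : ¬ G.Adj w o := by
          intro hadj
          apply hoO.2
          rw [← hKw, mem_Kc]
          exact Or.inr hadj
        exact pair_mem_Bad G hwNx hoO.1 hwo hnadjwo
      · rintro ⟨w₁, o₁⟩ hq₁ ⟨w₂, o₂⟩ hq₂ h
        simp only [Finset.coe_product, Set.mem_prod, Finset.mem_coe] at hq₁ hq₂
        obtain ⟨hw₁, ho₁⟩ := hq₁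
        obtain ⟨hw₂, ho₂⟩ := hq₂
        have hw₁K : w₁ ∈ Kc G v₀ := hAsub hw₁
        have hw₂K : w₂ ∈ Kc G v₀ := hAsub hw₂
        rw [hO, Finset.mem_sdiff] at ho₁ ho₂
        simp only at h
        have hww : w₁ = w₂ := by
          have : w₂ ∈ ({w₁, o₁} : Finset V) := h ▸ Finset.mem_insert_self w₂ _
          rcases Finset.mem_insert.1 this with h' | h'
          · exact h'.symm
          · exact absurd ((Finset.mem_singleton.1 h') ▸ hw₂K) ho₁.2
        have hoo : o₁ = o₂ := by
          have : o₂ ∈ ({w₁, o₁} : Finset V) :=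
            h ▸ Finset.mem_insert_of_mem (Finset.mem_singleton_self o₂)
          rcases Finset.mem_insert.1 this with h' | h'
          · exact absurd (h' ▸ hw₁K) ho₂.2
          · exact (Finset.mem_singleton.1 h').symm
        rw [Prod.ext_iff]
        exact ⟨hww, hoo⟩
    calc a * (Mset G v₀ x).card ≤ a * O.card := Nat.mul_le_mul_left a hstep1
      _ ≤ c := hstep2
  -- handshake sum bound
  have hsum : a * B.card ≤ 2 * c := by
    calc a * B.card = ∑ _x ∈ B, a := by rw [Finset.sum_const, smul_eq_mul, mul_comm]
      _ ≤ ∑ x ∈ B, (Mset G v₀ x).card := Finset.sum_le_sum hMa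
      _ = ∑ x ∈ B, ((Bad G v₀).filter (fun p => x ∈ p)).card :=
          Finset.sum_congr rfl fun x hx => Mset_card G v₀ x (hBmem x hx).1
      _ ≤ 2 * (Bad G v₀).card := handshake G v₀ B
      _ = 2 * c := by rw [hbad]
  -- B is nonempty
  have hBne : B.Nonempty := by
    have hBadne : (Bad G v₀).Nonempty := by
      rw [← Finset.card_pos, hbad]
      omega
    obtain ⟨p, hp⟩ := hBadne
    have hpc : p.Nonempty := by
      rw [← Finset.card_pos, (Bad_subset_pairs G hp).2]
      norm_num
    obtain ⟨x, hxp⟩ := hpc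
    obtain ⟨y, hyN, hyx, hnadj, rfl⟩ := mem_Bad_elim G hp hxp
    have hxN : x ∈ G.neighborFinset v₀ :=
      (Bad_subset_pairs G hp).1 (Finset.mem_insert_self x _)
    refine ⟨x, ?_⟩
    rw [hB, Finset.mem_sdiff]
    refine ⟨Finset.mem_insert_of_mem hxN, ?_⟩
    intro hxA
    rw [hA, mem_filter] at hxA
    have : y ∈ Kc G x := by
      rw [hxA.2]
      exact Finset.mem_insert_of_mem hyN
    rcases (mem_Kc G).1 this with h | h
    · exact hyx h
    · exact hnadj h
  -- final contradiction
  obtain ⟨x₀, hx₀⟩ := hBne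
  have haa : a * a ≤ c := le_trans (Nat.mul_le_mul_left a (hMa x₀ hx₀)) (hF7 x₀ hx₀)
  have haK : a ≤ r2 + 1 := by
    rw [← card_Kc G hdeg v₀, ha]
    exact Finset.card_le_card hAsub
  have hab : a + B.card = r2 + 1 := by omega
  have key : a * (r2 + 1) ≤ 3 * c := by
    calc a * (r2 + 1) = a * (a + B.card) := by rw [hab]
      _ = a * a + a * B.card := Nat.left_distrib a a B.card
      _ ≤ c + 2 * c := Nat.add_le_add haa hsum
      _ = 3 * c := by ring
  have final : 2 * (r2 + 1) ≤ 3 * c :=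
    le_trans (Nat.mul_le_mul_right (r2 + 1) ha2) key
  omega
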